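/- If X is a topological space, F is a filter base on X, and F converges to a compact set K (i.e., every open set containing K contains some member of F), then F is total, i.e., every filter base H extending F satisfies ⋂{cl(H) : H ∈ H} ≠ ∅. -/
import Mathlib


open Set Topology

/-- A filter base on `X`: a nonempty family of subsets of `X`, not containing `∅`,
closed under pairwise intersections. -/
def FilterBaseOn (X : Type*) (F : Set (Set X)) : Prop :=
  F.Nonempty ∧ ∅ ∉ F ∧ ∀ A ∈ F, ∀ B ∈ F, A ∩ B ∈ F

/-- `F` converges to the set `W`: every open set containing `W` contains a member of `F`. -/
def ConvergesTo {X : Type*} [TopologicalSpace X] (F : Set (Set X)) (W : Set X) : Prop :=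
  ∀ U : Set X, IsOpen U → W ⊆ U → ∃ A ∈ F, A ⊆ U

/-- `F` is total: every filter base extending `F` has nonempty adherence
(intersection of the closures of all its members). -/
def TotalFB {X : Type*} [TopologicalSpace X] (F : Set (Set X)) : Prop :=
  ∀ H : Set (Set X), FilterBaseOn X H → F ⊆ H → (⋂ A ∈ H, closure A).Nonempty

/-- `F` is stable under countable intersections: every countable subfamily of `F`
has a member of `F` contained in its intersection. -/
def StableCI {X : Type*} (F : Set (Set X)) : Prop :=
  ∀ S ⊆ F, S.Countable → ∃ H ∈ F, H ⊆ ⋂₀ S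

/-- `F` is ω-closed: the intersection of any nonempty countable subfamily of `F` belongs to `F`. -/
def OmegaClosedFB {X : Type*} (F : Set (Set X)) : Prop :=
  ∀ S ⊆ F, S.Countable → S.Nonempty → ⋂₀ S ∈ F

/-- `F` is δ-stable: every nonempty countable subfamily of `F` has nonempty intersection. -/
def DeltaStableFB {X : Type*} (F : Set (Set X)) : Prop :=
  ∀ S ⊆ F, S.Countable → S.Nonempty → (⋂₀ S).Nonempty

/-- `G_δ(K)`: the family of Gδ subsets (countable intersections of open sets) containing `K`. -/
def GdeltaNbhds {X : Type*} [TopologicalSpace X] (K : Set X) : Set (Set X) :=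
  {G | K ⊆ G ∧ IsGδ G}

/-- `F ∨ G = {F₀ ∩ F₁ : F₀, F₁ ∈ F ∪ G}`. -/
def joinFB {X : Type*} (F G : Set (Set X)) : Set (Set X) :=
  {A | ∃ F₀ ∈ F ∪ G, ∃ F₁ ∈ F ∪ G, A = F₀ ∩ F₁}

/-- `X` is totally Lindelöf: every filter base stable under countable intersections
extends to a total filter base stable under countable intersections. -/
def TotallyLindelofSpace (X : Type*) [TopologicalSpace X] : Prop :=
  ∀ F : Set (Set X), FilterBaseOn X F → StableCI F →
    ∃ H : Set (Set X), FilterBaseOn X H ∧ StableCI H ∧ F ⊆ H ∧ TotalFB H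

/-- `X` is Alster: every cover of `X` by Gδ sets such that every compact subset of `X`
is contained in a single member admits a countable subcover. -/
def AlsterSpace (X : Type*) [TopologicalSpace X] : Prop :=
  ∀ 𝒢 : Set (Set X), (∀ G ∈ 𝒢, IsGδ G) → (∀ K : Set X, IsCompact K → ∃ G ∈ 𝒢, K ⊆ G) →
    ∃ 𝒞 ⊆ 𝒢, 𝒞.Countable ∧ ⋃₀ 𝒞 = Set.univ

/-- `D` is a discrete subset: each of its points has an open neighborhood meeting `D`
only in that point. -/
def IsDiscreteSubset {X : Type*} [TopologicalSpace X] (D : Set X) : Prop :=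
  ∀ a ∈ D, ∃ U : Set X, IsOpen U ∧ U ∩ D = {a}

/-- The first uncountable ordinal ω₁. -/
noncomputable def omega1 : Ordinal := (Cardinal.aleph 1).ord

theorem stmt0 {X : Type*} [TopologicalSpace X] (F : Set (Set X)) (K : Set X)
    (hF : FilterBaseOn X F) (hK : IsCompact K) (hconv : ConvergesTo F K) :
    TotalFB F := by
  obtain ⟨⟨F₀, hF₀⟩, hFempty, _⟩ := hF
  intro H hH hFH
  obtain ⟨hHne, hHempty, hHinter⟩ := hH
  -- every member of H has closure meeting K
  have key : ∀ A ∈ H, (K ∩ closure A).Nonempty := by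
    intro A hA
    by_contra h
    rw [Set.not_nonempty_iff_eq_empty] at h
    have hKU : K ⊆ (closure A)ᶜ := fun x hx hxc =>
      Set.eq_empty_iff_forall_notMem.mp h x ⟨hx, hxc⟩
    obtain ⟨B, hBF, hBU⟩ := hconv _ isClosed_closure.isOpen_compl hKU
    have hAB : A ∩ B ∈ H := hHinter A hA B (hFH hBF)
    have hABe : A ∩ B = ∅ := Set.eq_empty_iff_forall_notMem.mpr
      (fun x ⟨hxA, hxB⟩ => hBU hxB (subset_closure hxA))
    exact hHempty (hABe ▸ hAB)
  -- finite intersections of H contain a member of H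
  classical
  have fin : ∀ t : Finset H, ∃ B ∈ H, ∀ i ∈ t, B ⊆ (i : Set X) := by
    intro t
    induction t using Finset.induction with
    | empty =>
      exact ⟨F₀, hFH hF₀, fun i hi => absurd hi (Finset.notMem_empty i)⟩
    | @insert a s _ ih =>
      obtain ⟨B, hBH, hB⟩ := ih
      refine ⟨(a : Set X) ∩ B, hHinter _ a.2 _ hBH, fun i hi => ?_⟩
      rcases Finset.mem_insert.mp hi with h | h
      · subst h; exact Set.inter_subset_left
      · exact Set.inter_subset_right.trans (hB i h)
  have main := hK.inter_iInter_nonempty (fun A : H => closure (A : Set X))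
    (fun _ => isClosed_closure) ?_
  · obtain ⟨x, hxK, hx⟩ := main
    refine ⟨x, ?_⟩
    simp only [Set.mem_iInter]
    intro A hA
    exact Set.mem_iInter.mp hx ⟨A, hA⟩
  · intro t
    obtain ⟨B, hBH, hB⟩ := fin t
    obtain ⟨x, hxK, hxB⟩ := key B hBH
    refine ⟨x, hxK, ?_⟩
    simp only [Set.mem_iInter]
    intro i hi
    exact closure_mono (hB i hi) hxB
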